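/- (Operators' profit loss, high comparable costs regime) The function f(δ) = ((1 + δ²)/2)·e^{(1−δ)/2} on [0, 1] is strictly convex (indeed f''(δ) = e^{(1−δ)/2}·(δ² − 8δ + 9)/8 > 0 on [0, 1]); its unique minimizer on [0, 1] is δ* = 2 − √3, with minimum value f(δ*) = (4 − 2√3)·e^{(√3−1)/2}; and f(δ) ≥ 3/4 for all δ ∈ [0, 1]. -/

import Mathlib

open Real

private lemma hasDerivF (x : ℝ) :
    HasDerivAt (fun δ : ℝ => ((1 + δ ^ 2) / 2) * Real.exp ((1 - δ) / 2))
      (Real.exp ((1 - x) / 2) * (4 * x - 1 - x ^ 2) / 4) x := by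
  have h1 : HasDerivAt (fun δ : ℝ => (1 + δ ^ 2) / 2) x x := by
    have := ((hasDerivAt_pow 2 x).const_add 1).div_const 2
    exact this.congr_deriv (by norm_num)
  have h2 : HasDerivAt (fun δ : ℝ => Real.exp ((1 - δ) / 2))
      (Real.exp ((1 - x) / 2) * (-1 / 2)) x := by
    have hin : HasDerivAt (fun δ : ℝ => (1 - δ) / 2) (-1 / 2) x := by
      have := ((hasDerivAt_id x).const_sub 1).div_const 2
      exact this
    exact hin.exp
  have := h1.mul h2
  exact this.congr_deriv (by ring)

private lemma hasDerivF' (x : ℝ) :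
    HasDerivAt (fun δ : ℝ => Real.exp ((1 - δ) / 2) * (4 * δ - 1 - δ ^ 2) / 4)
      (Real.exp ((1 - x) / 2) * (x ^ 2 - 8 * x + 9) / 8) x := by
  have h2 : HasDerivAt (fun δ : ℝ => Real.exp ((1 - δ) / 2))
      (Real.exp ((1 - x) / 2) * (-1 / 2)) x := by
    have hin : HasDerivAt (fun δ : ℝ => (1 - δ) / 2) (-1 / 2) x := by
      have := ((hasDerivAt_id x).const_sub 1).div_const 2
      exact this
    exact hin.exp
  have hp : HasDerivAt (fun δ : ℝ => 4 * δ - 1 - δ ^ 2) (4 - 2 * x) x := by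
    have := (((hasDerivAt_id x).const_mul 4).sub_const 1).sub (hasDerivAt_pow 2 x)
    exact this.congr_deriv (by norm_num)
  have := (h2.mul hp).div_const 4
  exact this.congr_deriv (by ring)

private lemma derivF :
    deriv (fun δ : ℝ => ((1 + δ ^ 2) / 2) * Real.exp ((1 - δ) / 2))
      = fun δ : ℝ => Real.exp ((1 - δ) / 2) * (4 * δ - 1 - δ ^ 2) / 4 := by
  funext x
  exact (hasDerivF x).deriv

private lemma derivF' (x : ℝ) :
    deriv (deriv (fun δ : ℝ => ((1 + δ ^ 2) / 2) * Real.exp ((1 - δ) / 2))) x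
      = Real.exp ((1 - x) / 2) * (x ^ 2 - 8 * x + 9) / 8 := by
  rw [derivF]
  exact (hasDerivF' x).deriv

private lemma sq3 : Real.sqrt 3 ^ 2 = 3 := Real.sq_sqrt (by norm_num)

private lemma sqrt3_lt : 1 < Real.sqrt 3 ∧ Real.sqrt 3 < 2 := by
  constructor <;> nlinarith [sq3, Real.sqrt_nonneg 3]

theorem stmt_18 :
    StrictConvexOn ℝ (Set.Icc (0 : ℝ) 1)
      (fun δ : ℝ => ((1 + δ ^ 2) / 2) * exp ((1 - δ) / 2)) ∧
    (∀ δ ∈ Set.Icc (0 : ℝ) 1,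
      deriv (deriv (fun δ : ℝ => ((1 + δ ^ 2) / 2) * exp ((1 - δ) / 2))) δ
        = exp ((1 - δ) / 2) * (δ ^ 2 - 8 * δ + 9) / 8 ∧
      0 < exp ((1 - δ) / 2) * (δ ^ 2 - 8 * δ + 9) / 8) ∧
    (∀ δ ∈ Set.Icc (0 : ℝ) 1, δ ≠ 2 - Real.sqrt 3 →
      ((1 + (2 - Real.sqrt 3) ^ 2) / 2) * exp ((1 - (2 - Real.sqrt 3)) / 2) <
        ((1 + δ ^ 2) / 2) * exp ((1 - δ) / 2)) ∧
    ((1 + (2 - Real.sqrt 3) ^ 2) / 2) * exp ((1 - (2 - Real.sqrt 3)) / 2)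
      = (4 - 2 * Real.sqrt 3) * exp ((Real.sqrt 3 - 1) / 2) ∧
    (∀ δ ∈ Set.Icc (0 : ℝ) 1, (3 : ℝ) / 4 ≤ ((1 + δ ^ 2) / 2) * exp ((1 - δ) / 2)) := by
  obtain ⟨hs1, hs2⟩ := sqrt3_lt
  have hsnn := Real.sqrt_nonneg 3
  set F : ℝ → ℝ := fun δ : ℝ => ((1 + δ ^ 2) / 2) * Real.exp ((1 - δ) / 2) with hF
  have hcont : Continuous F := by fun_prop
  have hds : Real.sqrt 3 ^ 2 = 3 := sq3
  have hd0 : (0:ℝ) ≤ 2 - Real.sqrt 3 := by linarith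
  have hd1 : (2:ℝ) - Real.sqrt 3 ≤ 1 := by linarith
  -- positivity of second derivative on [0,1]
  have hpos : ∀ x ∈ Set.Icc (0 : ℝ) 1,
      0 < Real.exp ((1 - x) / 2) * (x ^ 2 - 8 * x + 9) / 8 := by
    intro x hx
    have := Real.exp_pos ((1 - x) / 2)
    nlinarith [hx.1, hx.2, sq_nonneg x]
  -- strict convexity
  have hconv : StrictConvexOn ℝ (Set.Icc (0 : ℝ) 1) F := by
    apply strictConvexOn_of_deriv2_pos (convex_Icc 0 1) hcont.continuousOn
    intro x hx
    rw [interior_Icc] at hx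
    simp only [Function.iterate_succ, Function.iterate_zero, Function.comp_apply, id_eq]
    rw [derivF' x]
    exact hpos x ⟨le_of_lt hx.1, le_of_lt hx.2⟩
  -- sign of first derivative
  have hderivsign : ∀ x : ℝ, deriv F x = Real.exp ((1 - x) / 2) * (4 * x - 1 - x ^ 2) / 4 :=
    fun x => by rw [hF, derivF]
  have hanti : StrictAntiOn F (Set.Icc (0 : ℝ) (2 - Real.sqrt 3)) := by
    apply strictAntiOn_of_deriv_neg (convex_Icc _ _) hcont.continuousOn
    intro x hx
    rw [interior_Icc] at hx
    rw [hderivsign x]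
    have he := Real.exp_pos ((1 - x) / 2)
    have : 4 * x - 1 - x ^ 2 < 0 := by nlinarith [hx.1, hx.2]
    nlinarith
  have hmono : StrictMonoOn F (Set.Icc (2 - Real.sqrt 3) (1 : ℝ)) := by
    apply strictMonoOn_of_deriv_pos (convex_Icc _ _) hcont.continuousOn
    intro x hx
    rw [interior_Icc] at hx
    rw [hderivsign x]
    have he := Real.exp_pos ((1 - x) / 2)
    have : 0 < 4 * x - 1 - x ^ 2 := by nlinarith [hx.1, hx.2]
    nlinarith
  -- strict minimality
  have hmin : ∀ δ ∈ Set.Icc (0 : ℝ) 1, δ ≠ 2 - Real.sqrt 3 →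
      F (2 - Real.sqrt 3) < F δ := by
    intro δ hδ hne
    rcases lt_or_gt_of_ne hne with h | h
    · exact hanti ⟨hδ.1, le_of_lt h⟩ ⟨hd0, le_refl _⟩ h
    · exact hmono ⟨le_refl _, hd1⟩ ⟨le_of_lt h, hδ.2⟩ h
  -- value at minimizer
  have hval : F (2 - Real.sqrt 3)
      = (4 - 2 * Real.sqrt 3) * Real.exp ((Real.sqrt 3 - 1) / 2) := by
    have hx : (1 - (2 - Real.sqrt 3)) / 2 = (Real.sqrt 3 - 1) / 2 := by ring
    have ha : (1 + (2 - Real.sqrt 3) ^ 2) / 2 = 4 - 2 * Real.sqrt 3 := by nlinarith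
    rw [hF]
    simp only
    rw [hx, ha]
  -- lower bound 3/4
  have hlow : (3 : ℝ) / 4 ≤ F (2 - Real.sqrt 3) := by
    rw [hval]
    have hhalf : (Real.sqrt 3 - 1) / 2 = (Real.sqrt 3 - 1) / 4 + (Real.sqrt 3 - 1) / 4 := by
      ring
    rw [hhalf, Real.exp_add]
    have he : 1 + (Real.sqrt 3 - 1) / 4 ≤ Real.exp ((Real.sqrt 3 - 1) / 4) := by
      linarith [Real.add_one_le_exp ((Real.sqrt 3 - 1) / 4)]
    have hnn : (0:ℝ) ≤ 1 + (Real.sqrt 3 - 1) / 4 := by linarith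
    nlinarith [mul_le_mul he he hnn (Real.exp_nonneg _)]
  refine ⟨hconv, fun δ _ => ⟨derivF' δ, ?_⟩, hmin, hval, fun δ hδ => ?_⟩
  · exact hpos δ (by assumption)
  · rcases eq_or_ne δ (2 - Real.sqrt 3) with h | h
    · rw [h]; exact hlow
    · exact le_trans hlow (le_of_lt (hmin δ hδ h))
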